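/- Let f = {f_1,...,f_L} be a smooth partition of unity subordinated to an open cover U = {U_1,...,U_L} of a symplectic manifold M, and I ⊆ {1,...,L} with I and I^c nonempty. Set φ = Σ_{α∈I} f_α. Then φ : M → [0,1], φ = 0 on a neighborhood of U(I) = (∪_{α∈I} U_α)^c, and φ = 1 on a neighborhood of U(I^c); moreover for any other partition of unity g subordinated to a cover V and J ⊆ {1,...,N} with ψ = Σ_{α∈J} g_α, one has ν_c(f,g) ≥ 4‖{φ,ψ}‖, hence pb(U,V) ≥ 4·pb₄(U(I), U(I^c), V(J), V(J^c)). -/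

import Mathlib

open scoped Pointwise


open scoped BigOperators

/-- The sup norm of a real-valued function. -/
noncomputable def supNorm {M : Type*} (h : M → ℝ) : ℝ :=
  sSup (Set.range fun z => |h z|)

/-- A partition of unity subordinated to a finite open cover. -/
def IsSubordinatedPU {M : Type*} [TopologicalSpace M] {L : ℕ}
    (U : Fin L → Set M) (f : Fin L → M → ℝ) : Prop :=
  (∀ i, Continuous (f i)) ∧ (∀ i z, 0 ≤ f i z) ∧ (∀ z, ∑ i, f i z = 1) ∧
  (∀ i, tsupport (f i) ⊆ U i)

/-- Magnitude of Poisson non-commutativity of a single partition of unity. -/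
noncomputable def nuC {M : Type*} (P : (M → ℝ) → (M → ℝ) → (M → ℝ)) {L : ℕ}
    (f : Fin L → M → ℝ) : ℝ :=
  sSup {r : ℝ | ∃ x y : Fin L → ℝ, (∀ i, |x i| ≤ 1) ∧ (∀ i, |y i| ≤ 1) ∧
    r = supNorm (P (fun w => ∑ i, x i * f i w) (fun w => ∑ i, y i * f i w))}

/-- Magnitude of mutual Poisson non-commutativity of two partitions of unity. -/
noncomputable def nuC2 {M : Type*} (P : (M → ℝ) → (M → ℝ) → (M → ℝ)) {L N : ℕ}
    (f : Fin L → M → ℝ) (g : Fin N → M → ℝ) : ℝ :=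
  sSup {r : ℝ | ∃ (x : Fin L → ℝ) (y : Fin N → ℝ),
    (∀ i, |x i| ≤ 1) ∧ (∀ j, |y j| ≤ 1) ∧
    r = supNorm (P (fun w => ∑ i, x i * f i w) (fun w => ∑ j, y j * g j w))}

/-- The Poisson bracket invariant of a pair of finite open covers. -/
noncomputable def pb2 {M : Type*} [TopologicalSpace M]
    (P : (M → ℝ) → (M → ℝ) → (M → ℝ)) {L N : ℕ}
    (U : Fin L → Set M) (V : Fin N → Set M) : ℝ :=
  sInf {r : ℝ | ∃ (f : Fin L → M → ℝ) (g : Fin N → M → ℝ),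
    IsSubordinatedPU U f ∧ IsSubordinatedPU V g ∧
    r = max (max (nuC P f) (nuC P g)) (nuC2 P f g)}

/-- The `pb₄` invariant of a quadruple of subsets. -/
noncomputable def pb4 {M : Type*} [TopologicalSpace M]
    (P : (M → ℝ) → (M → ℝ) → (M → ℝ)) (X₀ X₁ Y₀ Y₁ : Set M) : ℝ :=
  sInf {r : ℝ | ∃ φ ψ : M → ℝ,
    (∀ z, 0 ≤ φ z ∧ φ z ≤ 1) ∧ (∀ z, 0 ≤ ψ z ∧ ψ z ≤ 1) ∧
    (∃ X : Set M, IsOpen X ∧ X₀ ⊆ X ∧ ∀ x ∈ X, φ x = 0) ∧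
    (∃ X : Set M, IsOpen X ∧ X₁ ⊆ X ∧ ∀ x ∈ X, φ x = 1) ∧
    (∃ Y : Set M, IsOpen Y ∧ Y₀ ⊆ Y ∧ ∀ x ∈ Y, ψ x = 0) ∧
    (∃ Y : Set M, IsOpen Y ∧ Y₁ ⊆ Y ∧ ∀ x ∈ Y, ψ x = 1) ∧
    r = supNorm (P φ ψ)}

/-! ### Auxiliary lemmas -/

lemma supNorm_nonneg' {M : Type*} (h : M → ℝ) : 0 ≤ supNorm h :=
  Real.sSup_nonneg fun x hx => by rcases hx with ⟨z, rfl⟩; exact abs_nonneg _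

lemma supNorm_le' {M : Type*} {h : M → ℝ} {C : ℝ} (hC : 0 ≤ C) (hb : ∀ z, |h z| ≤ C) :
    supNorm h ≤ C :=
  Real.sSup_le (fun x hx => by rcases hx with ⟨z, rfl⟩; exact hb z) hC

lemma le_supNorm' {M : Type*} {h : M → ℝ} {C : ℝ} (hb : ∀ z, |h z| ≤ C) (z : M) :
    |h z| ≤ supNorm h :=
  le_csSup ⟨C, by rintro x ⟨w, rfl⟩; exact hb w⟩ ⟨z, rfl⟩

/-- The set of sup norms of coefficient combinations (coefficients in `[-1,1]`) of a
finite family of functions is bounded. -/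
lemma bdd_combos {M : Type*} {K : Type*} [Fintype K] (B : K → M → ℝ) :
    ∃ C : ℝ, 0 ≤ C ∧ ∀ c : K → ℝ, (∀ k, |c k| ≤ 1) →
      supNorm (fun z => ∑ k, c k * B k z) ≤ C := by
  classical
  set Φ : (K → ℝ) →ₗ[ℝ] (M → ℝ) :=
    { toFun := fun c => fun z => ∑ k, c k * B k z
      map_add' := by
        intro a b; funext z
        simp [add_mul, Finset.sum_add_distrib]
      map_smul' := by
        intro a b; funext z
        simp [Finset.mul_sum, mul_assoc] } with hΦ
  set Bd : Submodule ℝ (M → ℝ) :=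
    { carrier := {h | ∃ C, ∀ z, |h z| ≤ C}
      add_mem' := by
        rintro a b ⟨Ca, ha⟩ ⟨Cb, hb⟩
        exact ⟨Ca + Cb, fun z => (abs_add_le _ _).trans (add_le_add (ha z) (hb z))⟩
      zero_mem' := ⟨0, fun z => by simp⟩
      smul_mem' := by
        rintro a h ⟨C, hC⟩
        exact ⟨|a| * C, fun z => by
          simpa [abs_mul] using mul_le_mul_of_nonneg_left (hC z) (abs_nonneg a)⟩ } with hBd
  set W : Submodule ℝ (K → ℝ) := Submodule.comap Φ Bd with hW
  haveI : FiniteDimensional ℝ W := inferInstance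
  set d := Module.finrank ℝ W with hd
  set b : Module.Basis (Fin d) ℝ W := Module.finBasis ℝ W with hb
  set clm : Fin d → (W →L[ℝ] ℝ) := fun i => LinearMap.toContinuousLinearMap (b.coord i) with hclm
  have hbound : ∀ i : Fin d, ∃ Ci, ∀ z, |Φ ((b i : W) : K → ℝ) z| ≤ Ci := fun i => (b i).2
  set C : ℝ := ∑ i, ‖clm i‖ * supNorm (Φ ((b i : W) : K → ℝ)) with hC
  have hC0 : 0 ≤ C :=
    Finset.sum_nonneg fun i _ =>
      mul_nonneg (ContinuousLinearMap.opNorm_nonneg _) (supNorm_nonneg' _)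
  refine ⟨C, hC0, fun c hc => ?_⟩
  have hfun : (fun z => ∑ k, c k * B k z) = Φ c := rfl
  rw [hfun]
  by_cases hcW : c ∈ W
  · set w : W := ⟨c, hcW⟩ with hw
    have hwnorm : ‖w‖ ≤ 1 := by
      have : ‖c‖ ≤ 1 := (pi_norm_le_iff_of_nonneg zero_le_one).mpr fun k => by
        simpa [Real.norm_eq_abs] using hc k
      simpa using this
    have hcoord : ∀ i, |b.repr w i| ≤ ‖clm i‖ := by
      intro i
      have h1 : clm i w = b.repr w i := by simp [hclm, Module.Basis.coord_apply]
      have h2 := (clm i).le_opNorm w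
      rw [h1] at h2
      calc |b.repr w i| = ‖b.repr w i‖ := (Real.norm_eq_abs _).symm
        _ ≤ ‖clm i‖ * ‖w‖ := h2
        _ ≤ ‖clm i‖ * 1 :=
            mul_le_mul_of_nonneg_left hwnorm (ContinuousLinearMap.opNorm_nonneg _)
        _ = ‖clm i‖ := mul_one _
    have hsum : (c : K → ℝ) = ∑ i, b.repr w i • ((b i : W) : K → ℝ) := by
      have h0 : w = ∑ i, b.repr w i • b i := (b.sum_repr w).symm
      have := congrArg (Subtype.val) h0
      simpa only [Submodule.coe_sum, Submodule.coe_smul] using this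
    have hΦc : Φ c = ∑ i, b.repr w i • Φ ((b i : W) : K → ℝ) := by
      rw [hsum, map_sum]
      simp [map_smul]
    refine supNorm_le' hC0 fun z => ?_
    have hval : Φ c z = ∑ i, b.repr w i * Φ ((b i : W) : K → ℝ) z := by
      rw [hΦc]; simp
    rw [hval]
    calc |∑ i, b.repr w i * Φ ((b i : W) : K → ℝ) z|
        ≤ ∑ i, |b.repr w i * Φ ((b i : W) : K → ℝ) z| := Finset.abs_sum_le_sum_abs _ _
      _ ≤ C := by
          rw [hC]
          refine Finset.sum_le_sum fun i _ => ?_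
          rw [abs_mul]
          obtain ⟨Ci, hCi⟩ := hbound i
          exact mul_le_mul (hcoord i) (le_supNorm' hCi z) (abs_nonneg _)
            (ContinuousLinearMap.opNorm_nonneg _)
  · have hnb : ¬ BddAbove (Set.range fun z => |Φ c z|) := by
      intro ⟨Cb, hCb⟩
      exact hcW ⟨Cb, fun z => hCb ⟨z, rfl⟩⟩
    rw [supNorm, Real.sSup_of_not_bddAbove hnb]
    exact hC0

section Expand
variable {M : Type*} (P : (M → ℝ) → (M → ℝ) → (M → ℝ))
    (hPaddL : ∀ F G H : M → ℝ, P (F + G) H = P F H + P G H)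
    (hPaddR : ∀ F G H : M → ℝ, P F (G + H) = P F G + P F H)
    (hPsmulL : ∀ (c : ℝ) (F G : M → ℝ), P (c • F) G = c • P F G)
    (hPsmulR : ∀ (c : ℝ) (F G : M → ℝ), P F (c • G) = c • P F G)

include hPaddL hPsmulL in
lemma P_sum_left {ι : Type*} (s : Finset ι) (F : ι → M → ℝ) (G : M → ℝ) :
    P (∑ i ∈ s, F i) G = ∑ i ∈ s, P (F i) G := by
  have h0 : P 0 G = 0 := by
    have := hPsmulL 0 0 G
    simpa using this
  classical
  induction s using Finset.induction_on with
  | empty => simpa using h0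
  | insert _ _ hx ih =>
      rw [Finset.sum_insert hx, hPaddL, ih, Finset.sum_insert hx]

include hPaddR hPsmulR in
lemma P_sum_right {ι : Type*} (s : Finset ι) (F : M → ℝ) (G : ι → M → ℝ) :
    P F (∑ j ∈ s, G j) = ∑ j ∈ s, P F (G j) := by
  have h0 : P F 0 = 0 := by
    have := hPsmulR 0 F 0
    simpa using this
  classical
  induction s using Finset.induction_on with
  | empty => simpa using h0
  | insert _ _ hx ih =>
      rw [Finset.sum_insert hx, hPaddR, ih, Finset.sum_insert hx]

include hPaddL hPaddR hPsmulL hPsmulR in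
lemma P_expand {L N : ℕ} (f : Fin L → M → ℝ) (g : Fin N → M → ℝ)
    (x : Fin L → ℝ) (y : Fin N → ℝ) :
    P (fun w => ∑ i, x i * f i w) (fun w => ∑ j, y j * g j w)
      = fun z => ∑ k : Fin L × Fin N, (x k.1 * y k.2) * P (f k.1) (g k.2) z := by
  have hx : (fun w => ∑ i, x i * f i w) = ∑ i, x i • f i := by
    funext w; simp
  have hy : (fun w => ∑ j, y j * g j w) = ∑ j, y j • g j := by
    funext w; simp
  rw [hx, hy, P_sum_left P hPaddL hPsmulL]
  funext z
  rw [Finset.sum_apply]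
  rw [Fintype.sum_prod_type]
  refine Finset.sum_congr rfl fun i _ => ?_
  rw [hPsmulL, Pi.smul_apply, P_sum_right P hPaddR hPsmulR, Finset.sum_apply,
    smul_eq_mul, Finset.mul_sum]
  refine Finset.sum_congr rfl fun j _ => ?_
  rw [hPsmulR, Pi.smul_apply, smul_eq_mul]
  ring

end Expand

/-- Key inequality: `4‖P φ ψ‖ ≤ ν_c(f,g)` for overlap-layer functions. -/
lemma key_ineq {M : Type*} (P : (M → ℝ) → (M → ℝ) → (M → ℝ))
    (hPaddL : ∀ F G H : M → ℝ, P (F + G) H = P F H + P G H)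
    (hPaddR : ∀ F G H : M → ℝ, P F (G + H) = P F G + P F H)
    (hPsmulL : ∀ (c : ℝ) (F G : M → ℝ), P (c • F) G = c • P F G)
    (hPsmulR : ∀ (c : ℝ) (F G : M → ℝ), P F (c • G) = c • P F G)
    (hPconstL : ∀ (c : ℝ) (G : M → ℝ), P (fun _ => c) G = 0)
    (hPconstR : ∀ (c : ℝ) (F : M → ℝ), P F (fun _ => c) = 0)
    {L N : ℕ} (f : Fin L → M → ℝ) (g : Fin N → M → ℝ)
    (hfs : ∀ z, ∑ i, f i z = 1) (hgs : ∀ z, ∑ j, g j z = 1)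
    (I : Finset (Fin L)) (J : Finset (Fin N)) (φ ψ : M → ℝ)
    (hφ : φ = fun z => ∑ α ∈ I, f α z)
    (hψ : ψ = fun z => ∑ α ∈ J, g α z) :
    4 * supNorm (P φ ψ) ≤ nuC2 P f g := by
  classical
  set x : Fin L → ℝ := fun i => if i ∈ I then 1 else -1 with hxdef
  set y : Fin N → ℝ := fun j => if j ∈ J then 1 else -1 with hydef
  have hx1 : ∀ i, |x i| ≤ 1 := by
    intro i; by_cases h : i ∈ I <;> simp [hxdef, h]
  have hy1 : ∀ j, |y j| ≤ 1 := by
    intro j; by_cases h : j ∈ J <;> simp [hydef, h]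
  -- the special combinations equal 2φ-1 and 2ψ-1
  have hX : (fun w => ∑ i, x i * f i w) = (2 : ℝ) • φ + fun _ => (-1 : ℝ) := by
    funext w
    have hsplit := Finset.sum_add_sum_compl I (fun i => x i * f i w)
    have h1 : ∑ i ∈ I, x i * f i w = φ w := by
      rw [hφ]; exact Finset.sum_congr rfl fun i hi => by simp [hxdef, hi]
    have h2 : ∑ i ∈ Iᶜ, x i * f i w = -(1 - φ w) := by
      have hc : ∑ i ∈ Iᶜ, f i w = 1 - φ w := by
        have h3 := Finset.sum_add_sum_compl I (fun i => f i w)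
        rw [hfs w] at h3
        rw [hφ]; simp only; linarith
      calc ∑ i ∈ Iᶜ, x i * f i w = ∑ i ∈ Iᶜ, -(f i w) := by
            refine Finset.sum_congr rfl fun i hi => ?_
            have : i ∉ I := Finset.mem_compl.mp hi
            simp [hxdef, this]
        _ = -(1 - φ w) := by rw [Finset.sum_neg_distrib, hc]
    have := hsplit
    rw [h1, h2] at this
    simp only [Pi.add_apply, Pi.smul_apply, smul_eq_mul]
    linarith
  have hY : (fun w => ∑ j, y j * g j w) = (2 : ℝ) • ψ + fun _ => (-1 : ℝ) := by
    funext w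
    have hsplit := Finset.sum_add_sum_compl J (fun j => y j * g j w)
    have h1 : ∑ j ∈ J, y j * g j w = ψ w := by
      rw [hψ]; exact Finset.sum_congr rfl fun j hj => by simp [hydef, hj]
    have h2 : ∑ j ∈ Jᶜ, y j * g j w = -(1 - ψ w) := by
      have hc : ∑ j ∈ Jᶜ, g j w = 1 - ψ w := by
        have h3 := Finset.sum_add_sum_compl J (fun j => g j w)
        rw [hgs w] at h3
        rw [hψ]; simp only; linarith
      calc ∑ j ∈ Jᶜ, y j * g j w = ∑ j ∈ Jᶜ, -(g j w) := by
            refine Finset.sum_congr rfl fun j hj => ?_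
            have : j ∉ J := Finset.mem_compl.mp hj
            simp [hydef, this]
        _ = -(1 - ψ w) := by rw [Finset.sum_neg_distrib, hc]
    have := hsplit
    rw [h1, h2] at this
    simp only [Pi.add_apply, Pi.smul_apply, smul_eq_mul]
    linarith
  -- P of the special combinations equals 4 P φ ψ
  have hPXY : P (fun w => ∑ i, x i * f i w) (fun w => ∑ j, y j * g j w)
      = (4 : ℝ) • P φ ψ := by
    rw [hX, hY, hPaddL, hPconstL, add_zero, hPsmulL, hPaddR, hPconstR, add_zero, hPsmulR]
    rw [smul_smul]
    norm_num
  -- supNorm of 4•h is 4 * supNorm h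
  have h4 : supNorm ((4 : ℝ) • P φ ψ) = 4 * supNorm (P φ ψ) := by
    have hset : (Set.range fun z => |((4 : ℝ) • P φ ψ) z|)
        = (4 : ℝ) • Set.range fun z => |P φ ψ z| := by
      ext r
      constructor
      · rintro ⟨z, rfl⟩
        refine ⟨|P φ ψ z|, ⟨z, rfl⟩, ?_⟩
        simp [abs_mul, abs_of_nonneg]
      · rintro ⟨s, ⟨z, rfl⟩, rfl⟩
        refine ⟨z, ?_⟩
        simp [abs_mul, abs_of_nonneg]
    rw [supNorm, hset, Real.sSup_smul_of_nonneg (by norm_num : (0:ℝ) ≤ 4), smul_eq_mul]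
    rfl
  -- the target element belongs to the defining set of nuC2
  have hmem : 4 * supNorm (P φ ψ) ∈ {r : ℝ | ∃ (x : Fin L → ℝ) (y : Fin N → ℝ),
      (∀ i, |x i| ≤ 1) ∧ (∀ j, |y j| ≤ 1) ∧
      r = supNorm (P (fun w => ∑ i, x i * f i w) (fun w => ∑ j, y j * g j w))} :=
    ⟨x, y, hx1, hy1, by rw [hPXY, h4]⟩
  -- the defining set is bounded above
  obtain ⟨C, hC0, hCb⟩ := bdd_combos (fun k : Fin L × Fin N => P (f k.1) (g k.2))
  have hbdd : BddAbove {r : ℝ | ∃ (x : Fin L → ℝ) (y : Fin N → ℝ),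
      (∀ i, |x i| ≤ 1) ∧ (∀ j, |y j| ≤ 1) ∧
      r = supNorm (P (fun w => ∑ i, x i * f i w) (fun w => ∑ j, y j * g j w))} := by
    refine ⟨C, ?_⟩
    rintro r ⟨x', y', hx', hy', rfl⟩
    rw [P_expand P hPaddL hPaddR hPsmulL hPsmulR f g x' y']
    refine hCb (fun k => x' k.1 * y' k.2) fun k => ?_
    rw [abs_mul]
    calc |x' k.1| * |y' k.2| ≤ 1 * 1 :=
          mul_le_mul (hx' k.1) (hy' k.2) (abs_nonneg _) zero_le_one
      _ = 1 := one_mul 1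
  exact le_csSup hbdd hmem

/-- Layer properties of `φ = ∑_{α ∈ I} f_α`. -/
lemma layer_props {M : Type*} [TopologicalSpace M] {L : ℕ}
    (U : Fin L → Set M) (f : Fin L → M → ℝ) (hf : IsSubordinatedPU U f)
    (I : Finset (Fin L)) (φ : M → ℝ) (hφ : φ = fun z => ∑ α ∈ I, f α z) :
    (∀ z, 0 ≤ φ z ∧ φ z ≤ 1) ∧
    (∃ X : Set M, IsOpen X ∧ (⋃ α ∈ I, U α)ᶜ ⊆ X ∧ ∀ x ∈ X, φ x = 0) ∧
    (∃ X : Set M, IsOpen X ∧ (⋃ β ∈ Iᶜ, U β)ᶜ ⊆ X ∧ ∀ x ∈ X, φ x = 1) := by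
  obtain ⟨hcont, hnn, hsum, hsupp⟩ := hf
  subst hφ
  refine ⟨fun z => ⟨Finset.sum_nonneg fun i _ => hnn i z, ?_⟩, ?_, ?_⟩
  · calc ∑ α ∈ I, f α z ≤ ∑ α, f α z :=
          Finset.sum_le_sum_of_subset_of_nonneg (Finset.subset_univ I)
            (fun i _ _ => hnn i z)
      _ = 1 := hsum z
  · refine ⟨(⋃ α ∈ I, tsupport (f α))ᶜ, ?_, ?_, ?_⟩
    · rw [isOpen_compl_iff]
      exact Set.Finite.isClosed_biUnion I.finite_toSet fun i _ => isClosed_tsupport _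
    · exact Set.compl_subset_compl.mpr (Set.iUnion₂_mono fun α _ => hsupp α)
    · intro z hz
      refine Finset.sum_eq_zero fun α hα => ?_
      have : z ∉ tsupport (f α) := fun h => hz (Set.mem_biUnion hα h)
      exact image_eq_zero_of_notMem_tsupport this
  · refine ⟨(⋃ β ∈ Iᶜ, tsupport (f β))ᶜ, ?_, ?_, ?_⟩
    · rw [isOpen_compl_iff]
      exact Set.Finite.isClosed_biUnion Iᶜ.finite_toSet fun i _ => isClosed_tsupport _
    · exact Set.compl_subset_compl.mpr (Set.iUnion₂_mono fun β _ => hsupp β)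
    · intro z hz
      have h0 : ∑ β ∈ Iᶜ, f β z = 0 := by
        refine Finset.sum_eq_zero fun β hβ => ?_
        have : z ∉ tsupport (f β) := fun h => hz (Set.mem_biUnion hβ h)
        exact image_eq_zero_of_notMem_tsupport this
      have hsplit := Finset.sum_add_sum_compl I (fun i => f i z)
      rw [hsum z, h0] at hsplit
      linarith

/-- Overlap-layer lower bound: for partitions of unity `f, g` subordinated to
covers `U, V` and index sets `I, J`, the function `φ = ∑_{α ∈ I} f_α` takes
values in `[0,1]`, vanishes near `U(I)`, equals `1` near `U(Iᶜ)`, and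
`ν_c(f,g) ≥ 4‖{φ,ψ}‖`; hence `pb(U,V) ≥ 4·pb₄(U(I), U(Iᶜ), V(J), V(Jᶜ))`. -/
theorem stmt_19 {M : Type*} [TopologicalSpace M]
    (P : (M → ℝ) → (M → ℝ) → (M → ℝ))
    (hPaddL : ∀ F G H : M → ℝ, P (F + G) H = P F H + P G H)
    (hPaddR : ∀ F G H : M → ℝ, P F (G + H) = P F G + P F H)
    (hPsmulL : ∀ (c : ℝ) (F G : M → ℝ), P (c • F) G = c • P F G)
    (hPsmulR : ∀ (c : ℝ) (F G : M → ℝ), P F (c • G) = c • P F G)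
    (hPconstL : ∀ (c : ℝ) (G : M → ℝ), P (fun _ => c) G = 0)
    (hPconstR : ∀ (c : ℝ) (F : M → ℝ), P F (fun _ => c) = 0)
    {L N : ℕ} (U : Fin L → Set M) (V : Fin N → Set M)
    (hUopen : ∀ i, IsOpen (U i)) (hVopen : ∀ j, IsOpen (V j))
    (hUcover : (⋃ i, U i) = Set.univ) (hVcover : (⋃ j, V j) = Set.univ)
    (f : Fin L → M → ℝ) (g : Fin N → M → ℝ)
    (hf : IsSubordinatedPU U f) (hg : IsSubordinatedPU V g)
    (I : Finset (Fin L)) (hI : I.Nonempty) (hIc : Iᶜ.Nonempty)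
    (J : Finset (Fin N)) (hJ : J.Nonempty) (hJc : Jᶜ.Nonempty)
    (φ ψ : M → ℝ)
    (hφ : φ = fun z => ∑ α ∈ I, f α z)
    (hψ : ψ = fun z => ∑ α ∈ J, g α z) :
    (∀ z, 0 ≤ φ z ∧ φ z ≤ 1) ∧
    (∃ X : Set M, IsOpen X ∧ (⋃ α ∈ I, U α)ᶜ ⊆ X ∧ ∀ x ∈ X, φ x = 0) ∧
    (∃ X : Set M, IsOpen X ∧ (⋃ β ∈ Iᶜ, U β)ᶜ ⊆ X ∧ ∀ x ∈ X, φ x = 1) ∧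
    4 * supNorm (P φ ψ) ≤ nuC2 P f g ∧
    4 * pb4 P ((⋃ α ∈ I, U α)ᶜ) ((⋃ β ∈ Iᶜ, U β)ᶜ)
              ((⋃ α ∈ J, V α)ᶜ) ((⋃ β ∈ Jᶜ, V β)ᶜ) ≤ pb2 P U V := by
  obtain ⟨hphi1, hphi2, hphi3⟩ := layer_props U f hf I φ hφ
  refine ⟨hphi1, hphi2, hphi3, key_ineq P hPaddL hPaddR hPsmulL hPsmulR hPconstL hPconstR
    f g hf.2.2.1 hg.2.2.1 I J φ ψ hφ hψ, ?_⟩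
  unfold pb2 pb4
  refine le_csInf ⟨max (max (nuC P f) (nuC P g)) (nuC2 P f g), f, g, hf, hg, rfl⟩ ?_
  rintro r ⟨f', g', hf', hg', rfl⟩
  obtain ⟨h1, h2, h3⟩ := layer_props U f' hf' I (fun z => ∑ α ∈ I, f' α z) rfl
  obtain ⟨k1, k2, k3⟩ := layer_props V g' hg' J (fun z => ∑ α ∈ J, g' α z) rfl
  have hmem : supNorm (P (fun z => ∑ α ∈ I, f' α z) (fun z => ∑ α ∈ J, g' α z)) ∈
      {r : ℝ | ∃ φ' ψ' : M → ℝ,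
        (∀ z, 0 ≤ φ' z ∧ φ' z ≤ 1) ∧ (∀ z, 0 ≤ ψ' z ∧ ψ' z ≤ 1) ∧
        (∃ X : Set M, IsOpen X ∧ (⋃ α ∈ I, U α)ᶜ ⊆ X ∧ ∀ x ∈ X, φ' x = 0) ∧
        (∃ X : Set M, IsOpen X ∧ (⋃ β ∈ Iᶜ, U β)ᶜ ⊆ X ∧ ∀ x ∈ X, φ' x = 1) ∧
        (∃ Y : Set M, IsOpen Y ∧ (⋃ α ∈ J, V α)ᶜ ⊆ Y ∧ ∀ x ∈ Y, ψ' x = 0) ∧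
        (∃ Y : Set M, IsOpen Y ∧ (⋃ β ∈ Jᶜ, V β)ᶜ ⊆ Y ∧ ∀ x ∈ Y, ψ' x = 1) ∧
        r = supNorm (P φ' ψ')} :=
    ⟨_, _, h1, k1, h2, h3, k2, k3, rfl⟩
  have hbdd : BddBelow {r : ℝ | ∃ φ' ψ' : M → ℝ,
        (∀ z, 0 ≤ φ' z ∧ φ' z ≤ 1) ∧ (∀ z, 0 ≤ ψ' z ∧ ψ' z ≤ 1) ∧
        (∃ X : Set M, IsOpen X ∧ (⋃ α ∈ I, U α)ᶜ ⊆ X ∧ ∀ x ∈ X, φ' x = 0) ∧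
        (∃ X : Set M, IsOpen X ∧ (⋃ β ∈ Iᶜ, U β)ᶜ ⊆ X ∧ ∀ x ∈ X, φ' x = 1) ∧
        (∃ Y : Set M, IsOpen Y ∧ (⋃ α ∈ J, V α)ᶜ ⊆ Y ∧ ∀ x ∈ Y, ψ' x = 0) ∧
        (∃ Y : Set M, IsOpen Y ∧ (⋃ β ∈ Jᶜ, V β)ᶜ ⊆ Y ∧ ∀ x ∈ Y, ψ' x = 1) ∧
        r = supNorm (P φ' ψ')} := by
    refine ⟨0, ?_⟩
    rintro r ⟨φ', ψ', _, _, _, _, _, _, rfl⟩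
    exact supNorm_nonneg' _
  have hle := csInf_le hbdd hmem
  have hk := key_ineq P hPaddL hPaddR hPsmulL hPsmulR hPconstL hPconstR
    f' g' hf'.2.2.1 hg'.2.2.1 I J _ _ rfl rfl
  have hmax : nuC2 P f' g' ≤ max (max (nuC P f') (nuC P g')) (nuC2 P f' g') :=
    le_max_right _ _
  linarith
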